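/- Let n ≥ 1. For every L ∈ ℕ, L ≥ 1, one has the exact identity Π_{nL,c}( 2^{n−1}/(2^n+1) ) = 2^{−nL}·( cot(π/(2(2^n+1))) )^L. -/

import Mathlib

open Real MeasureTheory Filter

noncomputable section

/-- The perturbing sequence: `c j = 1` if `n ∣ j`, else `0`. -/
def pert (n j : ℕ) : ℕ := if n ∣ j then 1 else 0

/-- The lacunary trigonometric product `Π_{r,γ}(α) = ∏_{j<r} |cos(2^j α π + γ_j π/2)|`. -/
def PiProd (r : ℕ) (γ : ℕ → ℕ) (α : ℝ) : ℝ :=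
  ∏ j ∈ Finset.range r, |Real.cos (2 ^ j * α * π + γ j * π / 2)|

private lemma abs_cos_add_int_mul_pi (θ : ℝ) (K : ℤ) :
    |Real.cos (θ + K * π)| = |Real.cos θ| := by
  rw [Real.cos_add, Real.sin_int_mul_pi, mul_zero, sub_zero, abs_mul,
    Real.abs_cos_int_mul_pi, mul_one]

private lemma abs_sin_telescope (y : ℝ) (m : ℕ) :
    |Real.sin (2 ^ m * y)|
      = 2 ^ m * |Real.sin y| * ∏ s ∈ Finset.range m, |Real.cos (2 ^ s * y)| := by
  induction m with
  | zero => simp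
  | succ m ih =>
    rw [Finset.prod_range_succ, show (2:ℝ) ^ (m+1) * y = 2 * (2 ^ m * y) by ring,
      Real.sin_two_mul, abs_mul, abs_mul, abs_two, ih]
    ring

/-- Theorem 3.1, second part: the exact identity
`Π_{nL,c}(2^{n-1}/(2^n+1)) = 2^{-nL}·(cot(π/(2(2^n+1))))^L`. -/
theorem PiProd_eq_cot_pow (n : ℕ) (hn : 1 ≤ n) (L : ℕ) (hL : 1 ≤ L) :
    PiProd (n * L) (pert n) ((2:ℝ) ^ (n - 1) / (2 ^ n + 1)) =
      ((2:ℝ) ^ (n * L))⁻¹ * Real.cot (π / (2 * (2 ^ n + 1))) ^ L := by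
  obtain ⟨m, rfl⟩ : ∃ m, n = m + 1 := ⟨n - 1, by omega⟩
  clear hn hL
  simp only [Nat.add_sub_cancel]
  set N : ℝ := 2 ^ (m+1) + 1 with hN
  have hNpos : (0:ℝ) < N := by positivity
  have h2pos : (0:ℝ) < 2 ^ (m+1) := by positivity
  have h2ge : (2:ℝ) ≤ 2 ^ (m+1) := by
    calc (2:ℝ) = 2 ^ 1 := by norm_num
    _ ≤ 2 ^ (m+1) := by
      apply pow_le_pow_right₀ (by norm_num); omega
  have hN1 : (1:ℝ) < N := by rw [hN]; linarith
  set x : ℝ := π / N with hx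
  have hxpos : 0 < x := div_pos pi_pos hNpos
  have hxlt : x < π := by
    rw [hx, div_lt_iff₀ hNpos]; nlinarith [pi_pos]
  have hcos : 0 < Real.cos (x/2) :=
    Real.cos_pos_of_mem_Ioo ⟨by linarith [pi_pos], by linarith⟩
  have hsin2 : 0 < Real.sin (x/2) :=
    Real.sin_pos_of_pos_of_lt_pi (by linarith) (by linarith)
  have hsinx : 0 < Real.sin x := Real.sin_pos_of_pos_of_lt_pi hxpos hxlt
  have h2nx : (2:ℝ)^(m+1) * x = π - x := by
    rw [hx]; field_simp; ring
  have hhalf : (2:ℝ)^m * x = π/2 - x/2 := by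
    have h2 : (2:ℝ)^(m+1) = 2 * 2^m := by ring
    rw [h2] at h2nx; linarith
  -- key per-term identity
  have key : ∀ q s : ℕ, s < m + 1 →
      |Real.cos (2 ^ ((m+1)*q + s) * ((2:ℝ)^m / N) * π
          + (pert (m+1) ((m+1)*q+s) : ℝ) * π / 2)|
        = |Real.cos (2 ^ (m + s) * x + (pert (m+1) s : ℝ) * π / 2)| := by
    intro q s hs
    have hp : pert (m+1) ((m+1)*q + s) = pert (m+1) s := by
      simp only [pert, Nat.dvd_add_right (dvd_mul_right (m+1) q)]
    obtain ⟨K', hK'⟩ : ((2:ℤ)^(m+1) + 1) ∣ ((2:ℤ)^(m+1))^q - (-1)^q := by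
      simpa [sub_neg_eq_add] using sub_dvd_pow_sub_pow ((2:ℤ)^(m+1)) (-1) q
    have hE : ((2:ℝ)^(m+1))^q = N * (K' : ℝ) + (-1)^q := by
      have h := congrArg (fun z : ℤ => (z : ℝ)) hK'
      push_cast at h
      rw [hN]; linarith
    have hsplit : (2:ℝ) ^ ((m+1)*q + s) * ((2:ℝ)^m / N) * π
        = ((K' * 2^(m+s) : ℤ) : ℝ) * π + (-1:ℝ)^q * (2^(m+s) * x) := by
      have h1 : (2:ℝ) ^ ((m+1)*q + s) = ((2:ℝ)^(m+1))^q * 2^s := by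
        rw [pow_add, pow_mul]
      have h2 : (2:ℝ)^(m+s) = (2:ℝ)^m * 2^s := pow_add 2 m s
      rw [h1, hE, hx]
      push_cast [h2]
      field_simp
    rw [hp, hsplit, show ((K' * 2^(m+s) : ℤ) : ℝ) * π + (-1:ℝ)^q * (2^(m+s)*x)
          + (pert (m+1) s : ℝ) * π / 2
        = ((-1:ℝ)^q * ((2:ℝ)^(m+s)*x) + (pert (m+1) s : ℝ) * π / 2)
          + ((K' * 2^(m+s) : ℤ) : ℝ) * π by push_cast; ring,
      abs_cos_add_int_mul_pi]
    rcases Nat.even_or_odd q with hq | hq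
    · rw [hq.neg_one_pow, one_mul]
    · rw [hq.neg_one_pow, neg_one_mul]
      rw [← Real.cos_neg (-((2:ℝ)^(m+s)*x) + (pert (m+1) s : ℝ) * π / 2)]
      rw [show -(-((2:ℝ)^(m+s)*x) + (pert (m+1) s : ℝ) * π / 2)
          = ((2:ℝ)^(m+s)*x + (pert (m+1) s : ℝ)*π/2)
            + ((-(pert (m+1) s : ℤ) : ℤ) : ℝ) * π by push_cast; ring,
        abs_cos_add_int_mul_pi]
  set B : ℝ := ∏ s ∈ Finset.range (m+1),
      |Real.cos (2 ^ (m + s) * x + (pert (m+1) s : ℝ) * π / 2)| with hB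
  have hprod : ∀ M : ℕ,
      (∏ j ∈ Finset.range ((m+1)*M),
        |Real.cos (2^j * ((2:ℝ)^m / N) * π + (pert (m+1) j : ℝ)*π/2)|) = B ^ M := by
    intro M
    induction M with
    | zero => simp
    | succ M ih =>
      rw [show (m+1)*(M+1) = (m+1)*M + (m+1) by ring, Finset.prod_range_add, ih, pow_succ]
      congr 1
      apply Finset.prod_congr rfl
      intro s hs
      exact key M s (Finset.mem_range.mp hs)
  have hBsplit : B = (∏ s ∈ Finset.range m, |Real.cos ((2:ℝ)^(m+1+s) * x)|)
      * Real.cos (x/2) := by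
    rw [hB, Finset.prod_range_succ']
    congr 1
    · apply Finset.prod_congr rfl
      intro s hs
      have hs' : s < m := Finset.mem_range.mp hs
      have hp : pert (m+1) (s+1) = 0 := by
        have hnd : ¬ (m+1) ∣ (s+1) := by
          intro h; have := Nat.le_of_dvd (Nat.succ_pos s) h; omega
        simp [pert, hnd]
      rw [hp, show m + (s+1) = m+1+s by omega]
      norm_num
    · have hp : pert (m+1) 0 = 1 := by simp [pert]
      rw [hp, Nat.add_zero, Nat.cast_one, one_mul, Real.cos_add_pi_div_two,
        abs_neg, hhalf, Real.sin_pi_div_two_sub, abs_of_pos hcos]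
  have htel := abs_sin_telescope ((2:ℝ)^(m+1) * x) m
  have hprod_eq : (∏ s ∈ Finset.range m, |Real.cos ((2:ℝ)^(m+1+s) * x)|)
      = ∏ s ∈ Finset.range m, |Real.cos ((2:ℝ)^s * ((2:ℝ)^(m+1)*x))| := by
    apply Finset.prod_congr rfl
    intro s _
    rw [show (2:ℝ)^(m+1+s)*x = 2^s*((2:ℝ)^(m+1)*x) by rw [pow_add]; ring]
  have hsl : |Real.sin ((2:ℝ)^(m+1) * x)| = Real.sin x := by
    rw [h2nx, Real.sin_pi_sub, abs_of_pos hsinx]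
  have hsl2 : |Real.sin ((2:ℝ)^m * ((2:ℝ)^(m+1) * x))| = Real.cos (x/2) := by
    rw [h2nx, show (2:ℝ)^m * (π - x) = ((2^m : ℕ) : ℝ) * π - (2:ℝ)^m * x by push_cast; ring,
      Real.sin_nat_mul_pi_sub, abs_neg, abs_mul, abs_pow, abs_neg, abs_one, one_pow,
      one_mul, hhalf, Real.sin_pi_div_two_sub, abs_of_pos hcos]
  have hPeq : Real.cos (x/2)
      = 2^m * Real.sin x * ∏ s ∈ Finset.range m, |Real.cos ((2:ℝ)^(m+1+s)*x)| := by
    rw [hprod_eq, ← hsl, ← hsl2]; exact htel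
  have hs2 : Real.sin x = 2 * Real.sin (x/2) * Real.cos (x/2) := by
    have h := Real.sin_two_mul (x/2)
    rw [show 2*(x/2) = x by ring] at h
    linarith
  have hPc : Real.cos (x/2) = 2^(m+1) * Real.sin (x/2) * Real.cos (x/2)
      * ∏ s ∈ Finset.range m, |Real.cos ((2:ℝ)^(m+1+s)*x)| := by
    rw [hs2] at hPeq
    linear_combination hPeq
  have h1 : (B * ((2:ℝ)^(m+1) * Real.sin (x/2))) * Real.cos (x/2)
      = Real.cos (x/2) * Real.cos (x/2) := by
    rw [hBsplit]
    linear_combination (-Real.cos (x/2)) * hPc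
  have h2 : B * ((2:ℝ)^(m+1) * Real.sin (x/2)) = Real.cos (x/2) :=
    mul_right_cancel₀ hcos.ne' h1
  have hBval : B = ((2:ℝ)^(m+1))⁻¹ * (Real.cos (x/2) / Real.sin (x/2)) := by
    field_simp
    linear_combination h2
  have hx2 : π/(2*N) = x/2 := by rw [hx, div_div, mul_comm]
  rw [PiProd] at *
  rw [hprod L, hBval, hx2, Real.cot_eq_cos_div_sin, mul_pow, inv_pow, ← pow_mul]
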